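/- Let A be an n-by-n reciprocal matrix and w an efficient vector for A. (i) If D is an n-by-n positive diagonal matrix, then D A D^{-1} is a reciprocal matrix and Dw is efficient for D A D^{-1}. (ii) If P is an n-by-n permutation matrix, then P A P^T is a reciprocal matrix and Pw is efficient for P A P^T. -/

import Mathlib

open Matrix

def PosVec {ι : Type*} (w : ι → ℝ) : Prop := ∀ i, 0 < w i

def IsReciprocal {ι : Type*} (A : Matrix ι ι ℝ) : Prop :=
  (∀ i j, 0 < A i j) ∧ ∀ i j, A j i = 1 / A i j

def IsEfficient {ι : Type*} (A : Matrix ι ι ℝ) (w : ι → ℝ) : Prop :=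
  PosVec w ∧ ∀ v : ι → ℝ, PosVec v →
    (∀ i j, |A i j - v i / v j| ≤ |A i j - w i / w j|) →
    ∃ c : ℝ, 0 < c ∧ v = c • w

lemma aux_diag_inv {n : ℕ} (d : Fin n → ℝ) (hd : ∀ i, 0 < d i) :
    (Matrix.diagonal d)⁻¹ = Matrix.diagonal (fun i => (d i)⁻¹) := by
  apply Matrix.inv_eq_right_inv
  rw [Matrix.diagonal_mul_diagonal]
  simp [fun i => (hd i).ne']

lemma aux_perm_entry {n : ℕ} (σ : Equiv.Perm (Fin n)) (A : Matrix (Fin n) (Fin n) ℝ)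
    (i j : Fin n) : (σ.permMatrix ℝ * A * (σ.permMatrix ℝ)ᵀ) i j = A (σ i) (σ j) := by
  simp [Equiv.Perm.permMatrix, Matrix.mul_apply, PEquiv.toMatrix_apply,
    Equiv.toPEquiv_apply, Finset.sum_ite_eq, Matrix.transpose_apply, Equiv.symm_apply_eq,
    Finset.sum_ite_eq']

lemma aux_perm_mulVec {n : ℕ} (σ : Equiv.Perm (Fin n)) (w : Fin n → ℝ) (i : Fin n) :
    ((σ.permMatrix ℝ).mulVec w) i = w (σ i) := by
  simp [Equiv.Perm.permMatrix, Matrix.mulVec, dotProduct, PEquiv.toMatrix_apply,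
    Equiv.toPEquiv_apply, Finset.sum_ite_eq]

lemma aux_diag_mulVec {n : ℕ} (d : Fin n → ℝ) (w : Fin n → ℝ) (i : Fin n) :
    ((Matrix.diagonal d).mulVec w) i = d i * w i := by
  simp [Matrix.mulVec, dotProduct, Matrix.diagonal, Finset.sum_ite_eq]

/-- efficiency is preserved under positive diagonal similarity and under
permutation similarity. -/
theorem efficient_monomial_similarity {n : ℕ} (A : Matrix (Fin n) (Fin n) ℝ)
    (hA : IsReciprocal A) (w : Fin n → ℝ) (hw : IsEfficient A w) :
    (∀ d : Fin n → ℝ, (∀ i, 0 < d i) →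
      IsReciprocal (Matrix.diagonal d * A * (Matrix.diagonal d)⁻¹) ∧
      IsEfficient (Matrix.diagonal d * A * (Matrix.diagonal d)⁻¹)
        ((Matrix.diagonal d).mulVec w)) ∧
    (∀ σ : Equiv.Perm (Fin n),
      IsReciprocal (σ.permMatrix ℝ * A * (σ.permMatrix ℝ)ᵀ) ∧
      IsEfficient (σ.permMatrix ℝ * A * (σ.permMatrix ℝ)ᵀ) ((σ.permMatrix ℝ).mulVec w)) := by
  obtain ⟨hApos, hArec⟩ := hA
  obtain ⟨hwpos, hweff⟩ := hw
  constructor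
  · intro d hd
    have hB : ∀ i j, (Matrix.diagonal d * A * (Matrix.diagonal d)⁻¹) i j
        = d i * A i j * (d j)⁻¹ := by
      intro i j
      rw [aux_diag_inv d hd]
      simp [Matrix.mul_diagonal, Matrix.diagonal_mul]
    have hBpos : ∀ i j, 0 < (Matrix.diagonal d * A * (Matrix.diagonal d)⁻¹) i j := by
      intro i j
      rw [hB]
      exact mul_pos (mul_pos (hd i) (hApos i j)) (inv_pos.mpr (hd j))
    refine ⟨⟨hBpos, ?_⟩, ?_⟩
    · intro i j
      rw [hB, hB, hArec i j]
      field_simp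
    · constructor
      · intro i
        rw [aux_diag_mulVec]
        exact mul_pos (hd i) (hwpos i)
      · intro v hv hle
        have hv' : PosVec (fun i => v i / d i) := fun i => div_pos (hv i) (hd i)
        have hprem : ∀ i j, |A i j - (fun i => v i / d i) i / (fun i => v i / d i) j|
            ≤ |A i j - w i / w j| := by
          intro i j
          simp only []
          have h := hle i j
          rw [hB] at h
          have hdi := (hd i).ne'
          have hdj := (hd j).ne'
          have hvi := (hv i).ne'
          have hvj := (hv j).ne'
          have hwi := (hwpos i).ne'
          have hwj := (hwpos j).ne'
          have h2 : (Matrix.diagonal d).mulVec w i / (Matrix.diagonal d).mulVec w j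
              = d i / d j * (w i / w j) := by
            rw [aux_diag_mulVec, aux_diag_mulVec]; field_simp
            try ring
          have h3 : d i * A i j * (d j)⁻¹ - d i / d j * (w i / w j)
              = d i / d j * (A i j - w i / w j) := by
            field_simp
            try ring
          have h7 : d i * A i j * (d j)⁻¹ - v i / v j
              = d i / d j * (A i j - v i / d i / (v j / d j)) := by
            field_simp
            try ring
          rw [h2, h3, h7, abs_mul, abs_mul] at h
          exact le_of_mul_le_mul_left h (abs_pos.mpr (div_pos (hd i) (hd j)).ne')
        obtain ⟨c, hc, hcv⟩ := hweff (fun i => v i / d i) hv' hprem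
        refine ⟨c, hc, ?_⟩
        funext i
        have hthis := congrFun hcv i
        simp only [Pi.smul_apply, smul_eq_mul] at hthis ⊢
        have hdi := (hd i).ne'
        field_simp at hthis
        rw [aux_diag_mulVec]
        linear_combination hthis
  · intro σ
    have hB : ∀ i j, (σ.permMatrix ℝ * A * (σ.permMatrix ℝ)ᵀ) i j = A (σ i) (σ j) :=
      aux_perm_entry σ A
    refine ⟨⟨fun i j => by rw [hB]; exact hApos _ _,
      fun i j => by rw [hB, hB]; exact hArec _ _⟩, ?_, ?_⟩
    · intro i
      rw [aux_perm_mulVec]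
      exact hwpos _
    · intro v hv hle
      have hv' : PosVec (fun i => v (σ⁻¹ i)) := fun i => hv _
      have hprem : ∀ i j, |A i j - (fun i => v (σ⁻¹ i)) i / (fun i => v (σ⁻¹ i)) j|
          ≤ |A i j - w i / w j| := by
        intro i j
        have h := hle (σ⁻¹ i) (σ⁻¹ j)
        rw [hB, aux_perm_mulVec, aux_perm_mulVec] at h
        simpa using h
      obtain ⟨c, hc, hcv⟩ := hweff (fun i => v (σ⁻¹ i)) hv' hprem
      refine ⟨c, hc, ?_⟩
      funext i
      have hthis := congrFun hcv (σ i)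
      simp only [Pi.smul_apply, smul_eq_mul, Equiv.Perm.inv_def, Equiv.symm_apply_apply] at hthis ⊢
      rw [aux_perm_mulVec]
      exact hthis
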